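/- Let Ω := ⋃_{j=1}^∞ (4^j, 4^j + 2^j) ⊆ ℝ, equipped with Lebesgue measure, and let f := 𝟏_{(4,6)} be the indicator function of the interval (4,6). Then: (a) for every x₀ ∈ ℝ, liminf_{r→∞} |(x₀−r, x₀+r) ∩ Ω|/(2r) = 0, so Ω does not satisfy the weak measure density (WMD) condition; (b) ∫_Ω |f(x)| dx = 2; (c) for every s ∈ (0,1), J(s) := ∫_Ω ∫_Ω |f(x)−f(y)|/|x−y|^{1+s} dy dx < ∞; and (d) lim_{s→0⁺} s·J(s) = 0. -/

import Mathlib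

noncomputable section

open MeasureTheory Filter Set
open scoped ENNReal NNReal Topology

namespace Paper

/-- `Ω = ⋃_{j ≥ 1} (4^j, 4^j + 2^j)` (indexed below by `j+1`, `j : ℕ`). -/
def ΩX : Set ℝ := ⋃ j : ℕ, Set.Ioo ((4 : ℝ) ^ (j + 1)) ((4 : ℝ) ^ (j + 1) + 2 ^ (j + 1))

/-- `f = 𝟏_{(4,6)}`. -/
def f11 : ℝ → ℝ := (Set.Ioo (4 : ℝ) 6).indicator fun _ => 1

/-- `J(s) = ∫_Ω ∫_Ω |f(x)-f(y)| / |x-y|^{1+s} dy dx`. -/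
def J11 (s : ℝ) : ℝ≥0∞ :=
  ∫⁻ x in ΩX, ∫⁻ y in ΩX,
    ENNReal.ofReal |f11 x - f11 y| / ENNReal.ofReal (|x - y| ^ (1 + s)) ∂volume ∂volume

/-! Helpers -/

def Iset (j : ℕ) : Set ℝ := Set.Ioo ((4 : ℝ) ^ (j + 1)) ((4 : ℝ) ^ (j + 1) + 2 ^ (j + 1))

lemma ΩX_def : ΩX = ⋃ j : ℕ, Iset j := rfl

lemma vol_Iset (j : ℕ) : volume (Iset j) = ENNReal.ofReal ((2:ℝ) ^ (j+1)) := by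
  rw [Iset, Real.volume_Ioo]
  ring_nf

lemma Iset_zero : Iset 0 = Set.Ioo (4:ℝ) 6 := by
  norm_num [Iset]

lemma f11_mem {x : ℝ} (hx : x ∈ Set.Ioo (4:ℝ) 6) : f11 x = 1 :=
  Set.indicator_of_mem hx _

lemma f11_not_mem {x : ℝ} (hx : x ∉ Set.Ioo (4:ℝ) 6) : f11 x = 0 :=
  Set.indicator_of_notMem hx _

lemma pow4_big (k : ℕ) : (16:ℝ) ≤ 4 ^ (k+2) := by
  calc (16:ℝ) = 4^2 := by norm_num
    _ ≤ 4^(k+2) := pow_le_pow_right₀ (by norm_num) (by omega)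

lemma not_mem_Ioo46 {j : ℕ} {x : ℝ} (hx : x ∈ Iset (j+1)) : x ∉ Set.Ioo (4:ℝ) 6 := by
  intro h
  have h16 := pow4_big j
  have h1 := hx.1
  have h2 := h.2
  linarith

lemma dist_bound {k : ℕ} {x y : ℝ} (hx : x ∈ Set.Ioo (4:ℝ) 6) (hy : y ∈ Iset (k+1)) :
    (4:ℝ)^(k+2)/2 ≤ |x - y| := by
  have h16 := pow4_big k
  have hy1 := hy.1
  have hx2 := hx.2
  rw [abs_sub_comm, abs_of_pos (by linarith)]
  linarith

lemma G_le {s : ℝ} (hs : 0 ≤ s) {c : ℝ} (x y : ℝ) (hc : 1 ≤ c) (hcd : c ≤ |x - y|) :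
    ENNReal.ofReal |f11 x - f11 y| / ENNReal.ofReal (|x - y| ^ (1 + s)) ≤
      ENNReal.ofReal c⁻¹ := by
  have h1 : ENNReal.ofReal |f11 x - f11 y| ≤ 1 := by
    rw [← ENNReal.ofReal_one]
    apply ENNReal.ofReal_le_ofReal
    unfold f11
    by_cases hx : x ∈ Set.Ioo (4:ℝ) 6 <;> by_cases hy : y ∈ Set.Ioo (4:ℝ) 6 <;>
      simp [hx, hy]
  have h2 : ENNReal.ofReal c ≤ ENNReal.ofReal (|x - y| ^ (1 + s)) := by
    apply ENNReal.ofReal_le_ofReal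
    calc c = c ^ (1:ℝ) := (Real.rpow_one c).symm
      _ ≤ c ^ (1 + s) := Real.rpow_le_rpow_of_exponent_le hc (by linarith)
      _ ≤ |x - y| ^ (1 + s) := Real.rpow_le_rpow (by linarith) hcd (by linarith)
  calc ENNReal.ofReal |f11 x - f11 y| / ENNReal.ofReal (|x - y| ^ (1 + s))
      ≤ 1 / ENNReal.ofReal c := ENNReal.div_le_div h1 h2
    _ = ENNReal.ofReal c⁻¹ := by
        rw [one_div, ← ENNReal.ofReal_inv_of_pos (by linarith)]

lemma inner_bound {s : ℝ} (hs : 0 ≤ s) {c x : ℝ} (hc : 1 ≤ c) (k : ℕ)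
    (hcd : ∀ y ∈ Iset k, c ≤ |x - y|) :
    (∫⁻ y in Iset k,
        ENNReal.ofReal |f11 x - f11 y| / ENNReal.ofReal (|x - y| ^ (1 + s)) ∂volume)
      ≤ ENNReal.ofReal c⁻¹ * ENNReal.ofReal ((2:ℝ)^(k+1)) := by
  calc (∫⁻ y in Iset k,
        ENNReal.ofReal |f11 x - f11 y| / ENNReal.ofReal (|x - y| ^ (1 + s)) ∂volume)
      ≤ ∫⁻ _ in Iset k, ENNReal.ofReal c⁻¹ ∂volume :=
        setLIntegral_mono' measurableSet_Ioo (fun y hy => G_le hs x y hc (hcd y hy))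
    _ = ENNReal.ofReal c⁻¹ * volume (Iset k) := setLIntegral_const _ _
    _ = _ := by rw [vol_Iset]

lemma inner_zero {s x : ℝ} (k : ℕ) (hfx : ∀ y ∈ Iset k, f11 x = f11 y) :
    (∫⁻ y in Iset k,
        ENNReal.ofReal |f11 x - f11 y| / ENNReal.ofReal (|x - y| ^ (1 + s)) ∂volume) = 0 := by
  refine le_antisymm ?_ (zero_le)
  calc (∫⁻ y in Iset k,
        ENNReal.ofReal |f11 x - f11 y| / ENNReal.ofReal (|x - y| ^ (1 + s)) ∂volume)
      ≤ ∫⁻ _ in Iset k, (0:ℝ≥0∞) ∂volume := by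
        apply setLIntegral_mono' measurableSet_Ioo
        intro y hy
        rw [hfx y hy, sub_self, abs_zero, ENNReal.ofReal_zero, ENNReal.zero_div]
    _ = 0 := lintegral_zero


lemma ofReal_half_pow (m : ℕ) : ENNReal.ofReal ((2⁻¹:ℝ) ^ m) = (2:ℝ≥0∞)⁻¹ ^ m := by
  rw [ENNReal.ofReal_pow (by norm_num), ENNReal.ofReal_inv_of_pos (by norm_num)]
  norm_num

lemma arith1 (k : ℕ) : ((4:ℝ)^(k+2)/2)⁻¹ * 2^(k+2) = (2:ℝ)⁻¹^(k+1) := by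
  have h4 : (4:ℝ)^(k+2) = 2^(k+2) * 2^(k+2) := by
    rw [show (4:ℝ) = 2*2 by norm_num, mul_pow]
  have h2 : (2:ℝ)^(k+2) ≠ 0 := by positivity
  rw [h4, inv_pow]
  field_simp
  ring_nf

lemma hc_one (k : ℕ) : (1:ℝ) ≤ (4:ℝ)^(k+2)/2 := by
  have := pow4_big k; linarith

lemma innerSum_zero {s : ℝ} (hs : 0 ≤ s) {x : ℝ} (hx : x ∈ Iset 0) :
    (∫⁻ y in ΩX,
        ENNReal.ofReal |f11 x - f11 y| / ENNReal.ofReal (|x - y| ^ (1 + s)) ∂volume) ≤ 2 := by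
  rw [Iset_zero] at hx
  rw [ΩX_def]
  calc (∫⁻ y in ⋃ j, Iset j,
        ENNReal.ofReal |f11 x - f11 y| / ENNReal.ofReal (|x - y| ^ (1 + s)) ∂volume)
      ≤ ∑' k : ℕ, ∫⁻ y in Iset k,
        ENNReal.ofReal |f11 x - f11 y| / ENNReal.ofReal (|x - y| ^ (1 + s)) ∂volume :=
        lintegral_iUnion_le _ _
    _ ≤ ∑' k : ℕ, (2:ℝ≥0∞)⁻¹ ^ k := by
        apply ENNReal.tsum_le_tsum
        intro k
        match k with
        | 0 =>
          rw [inner_zero]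
          · exact zero_le
          · intro y hy
            rw [Iset_zero] at hy
            rw [f11_mem hx, f11_mem hy]
        | (k+1) =>
          calc _ ≤ ENNReal.ofReal ((4:ℝ)^(k+2)/2)⁻¹ * ENNReal.ofReal ((2:ℝ)^(k+2)) :=
              inner_bound hs (hc_one k) (k+1) (fun y hy => dist_bound hx hy)
            _ = (2:ℝ≥0∞)⁻¹ ^ (k+1) := by
              rw [← ENNReal.ofReal_mul (by positivity), arith1, ofReal_half_pow]
    _ = 2 := by rw [ENNReal.tsum_geometric, ENNReal.one_sub_inv_two, inv_inv]

lemma innerSum_succ {s : ℝ} (hs : 0 ≤ s) {j : ℕ} {x : ℝ} (hx : x ∈ Iset (j+1)) :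
    (∫⁻ y in ΩX,
        ENNReal.ofReal |f11 x - f11 y| / ENNReal.ofReal (|x - y| ^ (1 + s)) ∂volume)
      ≤ ENNReal.ofReal ((4:ℝ)^(j+2)/2)⁻¹ * ENNReal.ofReal 2 := by
  rw [ΩX_def]
  calc (∫⁻ y in ⋃ k, Iset k,
        ENNReal.ofReal |f11 x - f11 y| / ENNReal.ofReal (|x - y| ^ (1 + s)) ∂volume)
      ≤ ∑' k : ℕ, ∫⁻ y in Iset k,
        ENNReal.ofReal |f11 x - f11 y| / ENNReal.ofReal (|x - y| ^ (1 + s)) ∂volume :=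
        lintegral_iUnion_le _ _
    _ ≤ ∑' k : ℕ, (if k = 0 then ENNReal.ofReal ((4:ℝ)^(j+2)/2)⁻¹ * ENNReal.ofReal 2 else 0) := by
        apply ENNReal.tsum_le_tsum
        intro k
        match k with
        | 0 =>
          simp only [if_pos rfl]
          have hb := inner_bound hs (hc_one j) 0 (x := x) (fun y hy => by
            rw [Iset_zero] at hy
            rw [abs_sub_comm]
            exact dist_bound hy hx)
          calc _ ≤ ENNReal.ofReal ((4:ℝ)^(j+2)/2)⁻¹ * ENNReal.ofReal ((2:ℝ)^(0+1)) := hb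
            _ = _ := by norm_num
        | (k+1) =>
          simp only [Nat.succ_ne_zero, if_false]
          rw [inner_zero]
          intro y hy
          rw [f11_not_mem (not_mem_Ioo46 hx), f11_not_mem (not_mem_Ioo46 hy)]
    _ = ENNReal.ofReal ((4:ℝ)^(j+2)/2)⁻¹ * ENNReal.ofReal 2 := tsum_ite_eq 0 _

lemma arith2 (j : ℕ) : ((4:ℝ)^(j+2)/2)⁻¹ * 2 * 2^(j+2) = 2 * (2:ℝ)⁻¹^(j+1) := by
  have h4 : (4:ℝ)^(j+2) = 2^(j+2) * 2^(j+2) := by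
    rw [show (4:ℝ) = 2*2 by norm_num, mul_pow]
  have h2 : (2:ℝ)^(j+2) ≠ 0 := by positivity
  rw [h4, inv_pow]
  field_simp
  ring_nf

lemma Jbound {s : ℝ} (hs : 0 ≤ s) : J11 s ≤ 12 := by
  have houter : ∀ j : ℕ, (∫⁻ x in Iset j, ∫⁻ y in ΩX,
      ENNReal.ofReal |f11 x - f11 y| / ENNReal.ofReal (|x - y| ^ (1 + s)) ∂volume ∂volume)
      ≤ 4 * (2:ℝ≥0∞)⁻¹ ^ j := by
    intro j
    match j with
    | 0 =>
      calc _ ≤ ∫⁻ _ in Iset 0, (2:ℝ≥0∞) ∂volume :=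
          setLIntegral_mono' measurableSet_Ioo (fun x hx => innerSum_zero hs hx)
        _ = 2 * volume (Iset 0) := setLIntegral_const _ _
        _ ≤ 4 * (2:ℝ≥0∞)⁻¹ ^ 0 := by
            rw [vol_Iset, show ((2:ℝ)^(0+1)) = 2 by norm_num, ENNReal.ofReal_ofNat]
            norm_num
    | (j+1) =>
      calc _ ≤ ∫⁻ _ in Iset (j+1),
            ENNReal.ofReal ((4:ℝ)^(j+2)/2)⁻¹ * ENNReal.ofReal 2 ∂volume :=
          setLIntegral_mono' measurableSet_Ioo (fun x hx => innerSum_succ hs hx)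
        _ = ENNReal.ofReal ((4:ℝ)^(j+2)/2)⁻¹ * ENNReal.ofReal 2 * volume (Iset (j+1)) :=
          setLIntegral_const _ _
        _ = 2 * (2:ℝ≥0∞)⁻¹ ^ (j+1) := by
          rw [vol_Iset, ← ENNReal.ofReal_mul (by positivity),
            ← ENNReal.ofReal_mul (by positivity), arith2,
            ENNReal.ofReal_mul (by norm_num), ofReal_half_pow]
          norm_num
        _ ≤ 4 * (2:ℝ≥0∞)⁻¹ ^ (j+1) :=
          mul_le_mul_left (by norm_num) _
  calc J11 s ≤ ∑' j : ℕ, ∫⁻ x in Iset j, ∫⁻ y in ΩX,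
        ENNReal.ofReal |f11 x - f11 y| / ENNReal.ofReal (|x - y| ^ (1 + s)) ∂volume ∂volume := by
        rw [J11, ΩX_def]
        exact lintegral_iUnion_le _ _
    _ ≤ ∑' j : ℕ, 4 * (2:ℝ≥0∞)⁻¹ ^ j := ENNReal.tsum_le_tsum houter
    _ ≤ 12 := by
        rw [ENNReal.tsum_mul_left, ENNReal.tsum_geometric, ENNReal.one_sub_inv_two, inv_inv]
        norm_num


lemma sum_pow_le (n : ℕ) : ∑ j ∈ Finset.range n, (2:ℝ)^(j+1) ≤ 2^(n+1) := by
  induction n with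
  | zero => norm_num
  | succ n ih =>
    rw [Finset.sum_range_succ]
    calc ∑ j ∈ Finset.range n, (2:ℝ)^(j+1) + 2^(n+1) ≤ (2:ℝ)^(n+1) + 2^(n+1) := by linarith
      _ = 2^(n+1+1) := by ring

lemma vol_inter_le (x₀ : ℝ) (n : ℕ) :
    volume (Set.Ioo (x₀ - ((4:ℝ)^(n+1) - x₀)) (x₀ + ((4:ℝ)^(n+1) - x₀)) ∩ ΩX)
      ≤ ENNReal.ofReal ((2:ℝ)^(n+1)) := by
  have hsub : Set.Ioo (x₀ - ((4:ℝ)^(n+1) - x₀)) (x₀ + ((4:ℝ)^(n+1) - x₀)) ∩ ΩX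
      ⊆ ⋃ j ∈ Finset.range n, Iset j := by
    rintro y ⟨hy1, hy2⟩
    rw [ΩX_def] at hy2
    obtain ⟨j, hj⟩ := mem_iUnion.1 hy2
    have hylt : y < 4^(n+1) := by have := hy1.2; linarith
    have hjn : j < n := by
      by_contra h
      push_neg at h
      have h1 : (4:ℝ)^(n+1) ≤ 4^(j+1) := pow_le_pow_right₀ (by norm_num) (by omega)
      have h2 := hj.1
      linarith
    exact mem_biUnion (Finset.mem_range.2 hjn) hj
  calc volume (Set.Ioo (x₀ - ((4:ℝ)^(n+1) - x₀)) (x₀ + ((4:ℝ)^(n+1) - x₀)) ∩ ΩX)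
      ≤ volume (⋃ j ∈ Finset.range n, Iset j) := measure_mono hsub
    _ ≤ ∑ j ∈ Finset.range n, volume (Iset j) := measure_biUnion_finset_le _ _
    _ = ∑ j ∈ Finset.range n, ENNReal.ofReal ((2:ℝ)^(j+1)) := by simp [vol_Iset]
    _ = ENNReal.ofReal (∑ j ∈ Finset.range n, (2:ℝ)^(j+1)) :=
        (ENNReal.ofReal_sum_of_nonneg (fun j _ => by positivity)).symm
    _ ≤ ENNReal.ofReal ((2:ℝ)^(n+1)) := ENNReal.ofReal_le_ofReal (sum_pow_le n)

lemma liminf_zero (x₀ : ℝ) :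
    liminf (fun r : ℝ =>
      volume (Set.Ioo (x₀ - r) (x₀ + r) ∩ ΩX) / ENNReal.ofReal (2 * r)) atTop = 0 := by
  set u : ℝ → ℝ≥0∞ := fun r =>
    volume (Set.Ioo (x₀ - r) (x₀ + r) ∩ ΩX) / ENNReal.ofReal (2 * r) with hu
  set φ : ℕ → ℝ := fun n => (4:ℝ)^(n+1) - x₀ with hφdef
  have h4 : Tendsto (fun n : ℕ => (4:ℝ)^(n+1)) atTop atTop :=
    (tendsto_pow_atTop_atTop_of_one_lt (by norm_num : (1:ℝ) < 4)).comp
      (tendsto_add_atTop_nat 1)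
  have hφ : Tendsto φ atTop atTop := by
    simp only [hφdef, sub_eq_add_neg]
    exact tendsto_atTop_add_const_right atTop (-x₀) h4
  have hgeom : Tendsto (fun n : ℕ => (2:ℝ≥0∞)⁻¹ ^ (n+1)) atTop (𝓝 0) := by
    have h := ENNReal.tendsto_pow_atTop_nhds_zero_of_lt_one (r := 2⁻¹)
      (ENNReal.inv_lt_one.2 (by norm_num))
    exact h.comp (tendsto_add_atTop_nat 1)
  have key : Tendsto (u ∘ φ) atTop (𝓝 0) := by
    refine tendsto_of_tendsto_of_tendsto_of_le_of_le'
      (tendsto_const_nhds : Tendsto (fun _ : ℕ => (0:ℝ≥0∞)) atTop (𝓝 0)) hgeom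
      (Eventually.of_forall (fun n => zero_le)) ?_
    · have hev : ∀ᶠ n : ℕ in atTop, 2 * x₀ ≤ (4:ℝ)^(n+1) := h4.eventually_ge_atTop (2*x₀)
      filter_upwards [hev] with n hn
      have hden : ENNReal.ofReal ((4:ℝ)^(n+1)) ≤ ENNReal.ofReal (2 * φ n) := by
        apply ENNReal.ofReal_le_ofReal
        simp only [hφdef]
        linarith
      calc u (φ n) ≤ ENNReal.ofReal ((2:ℝ)^(n+1)) / ENNReal.ofReal ((4:ℝ)^(n+1)) :=
            ENNReal.div_le_div (vol_inter_le x₀ n) hden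
        _ = ENNReal.ofReal ((2:ℝ)^(n+1) / (4:ℝ)^(n+1)) :=
            (ENNReal.ofReal_div_of_pos (by positivity)).symm
        _ = (2:ℝ≥0∞)⁻¹^(n+1) := by
            rw [← div_pow, show (2:ℝ)/4 = 2⁻¹ by norm_num, ofReal_half_pow]
  refine le_antisymm ?_ (zero_le)
  have h1 : liminf u atTop ≤ liminf (u ∘ φ) atTop := by
    rw [liminf_comp]
    exact liminf_le_liminf_of_le hφ
  rw [key.liminf_eq] at h1
  exact h1


lemma Ioo46_subset : Set.Ioo (4:ℝ) 6 ⊆ ΩX := by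
  rw [ΩX_def, ← Iset_zero]
  exact subset_iUnion Iset 0

lemma part_b : (∫⁻ x in ΩX, ENNReal.ofReal |f11 x| ∂volume) = 2 := by
  have heq : ∀ x : ℝ, ENNReal.ofReal |f11 x| =
      (Set.Ioo (4:ℝ) 6).indicator (fun _ => (1:ℝ≥0∞)) x := by
    intro x
    by_cases hx : x ∈ Set.Ioo (4:ℝ) 6
    · simp [f11_mem hx, Set.indicator_of_mem hx]
    · simp [f11_not_mem hx, Set.indicator_of_notMem hx]
  simp_rw [heq]
  rw [lintegral_indicator measurableSet_Ioo, setLIntegral_one,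
    Measure.restrict_apply measurableSet_Ioo,
    Set.inter_eq_left.mpr Ioo46_subset, Real.volume_Ioo]
  norm_num

theorem statement11 :
    (∀ x₀ : ℝ,
      liminf (fun r : ℝ =>
        volume (Set.Ioo (x₀ - r) (x₀ + r) ∩ ΩX) / ENNReal.ofReal (2 * r)) atTop = 0) ∧
    (¬ ∃ (x₀ C₀ : ℝ), 0 < C₀ ∧ C₀ ≤ 1 ∧
      ENNReal.ofReal C₀ ≤
        liminf (fun r : ℝ =>
          volume (Set.Ioo (x₀ - r) (x₀ + r) ∩ ΩX) / ENNReal.ofReal (2 * r)) atTop) ∧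
    (∫⁻ x in ΩX, ENNReal.ofReal |f11 x| ∂volume) = 2 ∧
    (∀ s ∈ Set.Ioo (0:ℝ) 1, J11 s < ∞) ∧
    Tendsto (fun s : ℝ => ENNReal.ofReal s * J11 s) (𝓝[>] (0:ℝ)) (𝓝 0) := by
  refine ⟨liminf_zero, ?_, part_b, ?_, ?_⟩
  · rintro ⟨x₀, C₀, hC₀, -, hle⟩
    rw [liminf_zero x₀] at hle
    exact (ENNReal.ofReal_pos.2 hC₀).not_ge hle
  · intro s hs
    exact lt_of_le_of_lt (Jbound hs.1.le) (by norm_num)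
  · have h0 : Tendsto (fun s : ℝ => ENNReal.ofReal s) (𝓝[>] (0:ℝ)) (𝓝 0) := by
      have h := (ENNReal.continuous_ofReal.tendsto 0).mono_left
        (nhdsWithin_le_nhds (s := Set.Ioi (0:ℝ)))
      simpa using h
    have hupper : Tendsto (fun s : ℝ => ENNReal.ofReal s * 12) (𝓝[>] (0:ℝ)) (𝓝 0) := by
      have := ENNReal.Tendsto.mul_const h0 (Or.inr (by norm_num : (12:ℝ≥0∞) ≠ ∞))
      simpa using this
    refine tendsto_of_tendsto_of_tendsto_of_le_of_le'
      (tendsto_const_nhds : Tendsto (fun _ : ℝ => (0:ℝ≥0∞)) _ (𝓝 0)) hupper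
      (Eventually.of_forall fun s => zero_le) ?_
    filter_upwards [self_mem_nhdsWithin] with s hs
    exact mul_le_mul_right (Jbound (le_of_lt hs)) _

end Paper
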